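/- Let v ∈ (0,1), let p = (X,Y) with Y ≥ 0 and e = (x,0) with p ≠ e, and let S := {w ∈ ℝ² : ‖w − e‖ = v·‖w − p‖}. Set O_x := (x − v²X)/(1−v²), O_y := −v²Y/(1−v²) and R := (v/(1−v²))·√((X−x)² + Y²). Then S intersects the X-axis (i.e., there exists w ∈ S with second coordinate 0), the intersection points are exactly (O_x ± √(R² − O_y²), 0), and the maximum of ‖w − e‖ over points w ∈ S with second coordinate 0 equals √(R² − O_y²) + |O_x − x|. -/

import Mathlib

set_option maxHeartbeats 1000000


open Real MeasureTheory Filter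

/-- A point of the plane `ℝ²`, given by its two coordinates. -/
noncomputable def pt (x y : ℝ) : EuclideanSpace ℝ (Fin 2) :=
  (WithLp.equiv 2 (Fin 2 → ℝ)).symm ![x, y]

lemma pt_apply1 (a b : ℝ) : pt a b 1 = b := by simp [pt]

lemma norm_pt (a b c d : ℝ) : ‖pt a b - pt c d‖ = Real.sqrt ((a-c)^2 + (b-d)^2) := by
  rw [EuclideanSpace.norm_eq]
  simp [pt, Fin.sum_univ_two, Real.norm_eq_abs, sq_abs]

lemma eq_pt_of (w : EuclideanSpace ℝ (Fin 2)) (h : w 1 = 0) : w = pt (w 0) 0 := by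
  ext i
  fin_cases i <;> simp [pt, h]

/-- The Apollonius circle intersects the X-axis, the intersection points are exactly
`(O_x ± √(R² − O_y²), 0)`, and the farthest such point from the evader `e = (x,0)` is
at distance `√(R² − O_y²) + |O_x − x|` from it. -/
theorem stmt_16 (v X Y x : ℝ) (hv0 : 0 < v) (hv1 : v < 1) (hY : 0 ≤ Y)
    (p e : EuclideanSpace ℝ (Fin 2))
    (hp : p = pt X Y) (he : e = pt x 0) (hne : p ≠ e)
    (Ox Oy R : ℝ)
    (hOx : Ox = (x - v ^ 2 * X) / (1 - v ^ 2))
    (hOy : Oy = -(v ^ 2 * Y) / (1 - v ^ 2))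
    (hR : R = v / (1 - v ^ 2) * Real.sqrt ((X - x) ^ 2 + Y ^ 2)) :
    (∃ w : EuclideanSpace ℝ (Fin 2), ‖w - e‖ = v * ‖w - p‖ ∧ w 1 = 0) ∧
    (∀ w : EuclideanSpace ℝ (Fin 2),
      (‖w - e‖ = v * ‖w - p‖ ∧ w 1 = 0) ↔
        (w = pt (Ox + Real.sqrt (R ^ 2 - Oy ^ 2)) 0 ∨
         w = pt (Ox - Real.sqrt (R ^ 2 - Oy ^ 2)) 0)) ∧
    IsGreatest {d : ℝ | ∃ w : EuclideanSpace ℝ (Fin 2),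
        ‖w - e‖ = v * ‖w - p‖ ∧ w 1 = 0 ∧ d = ‖w - e‖}
      (Real.sqrt (R ^ 2 - Oy ^ 2) + |Ox - x|) := by
  have hv2 : (0:ℝ) < 1 - v ^ 2 := by nlinarith
  have hs2 : Real.sqrt ((X - x) ^ 2 + Y ^ 2) ^ 2 = (X - x) ^ 2 + Y ^ 2 :=
    Real.sq_sqrt (by positivity)
  have hR2 : R ^ 2 = v ^ 2 / (1 - v ^ 2) ^ 2 * ((X - x) ^ 2 + Y ^ 2) := by
    rw [hR, mul_pow, div_pow, hs2]
  have hD : R ^ 2 - Oy ^ 2 = v ^ 2 * ((X - x) ^ 2 + (1 - v ^ 2) * Y ^ 2) / (1 - v ^ 2) ^ 2 := by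
    rw [hR2, hOy]; field_simp; ring
  have hDnn : 0 ≤ R ^ 2 - Oy ^ 2 := by
    rw [hD]
    apply div_nonneg _ (by positivity)
    have h1 : 0 ≤ (X - x) ^ 2 + (1 - v ^ 2) * Y ^ 2 := by nlinarith [sq_nonneg (X - x), sq_nonneg Y]
    exact mul_nonneg (sq_nonneg v) h1
  set q := Real.sqrt (R ^ 2 - Oy ^ 2) with hqdef
  have hq0 : 0 ≤ q := Real.sqrt_nonneg _
  have hq2 : q ^ 2 = R ^ 2 - Oy ^ 2 := Real.sq_sqrt hDnn
  clear_value q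
  -- algebraic identity
  have hident : ∀ t : ℝ, (t - x) ^ 2 - v ^ 2 * ((t - X) ^ 2 + Y ^ 2)
      = (1 - v ^ 2) * ((t - Ox) ^ 2 - (R ^ 2 - Oy ^ 2)) := by
    intro t
    rw [hD, hOx]
    field_simp
    ring
  have key : ∀ t : ℝ, (t - x) ^ 2 = v ^ 2 * ((t - X) ^ 2 + Y ^ 2) ↔
      (t = Ox + q ∨ t = Ox - q) := by
    intro t
    constructor
    · intro h
      have h2 : (t - Ox) ^ 2 = q ^ 2 := by nlinarith [hident t]
      have h3 : |t - Ox| = q := by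
        rw [← Real.sqrt_sq_eq_abs, h2, Real.sqrt_sq hq0]
      rcases (abs_eq hq0).mp h3 with h | h
      · left; linarith
      · right; linarith
    · rintro (rfl | rfl)
      · have h1 := hident (Ox + q)
        have h2 : (Ox + q - Ox) ^ 2 = R ^ 2 - Oy ^ 2 := by
          rw [show Ox + q - Ox = q by ring, hq2]
        have h3 : (1 - v ^ 2) * ((Ox + q - Ox) ^ 2 - (R ^ 2 - Oy ^ 2)) = 0 := by
          rw [h2]; ring
        linarith
      · have h1 := hident (Ox - q)
        have h2 : (Ox - q - Ox) ^ 2 = R ^ 2 - Oy ^ 2 := by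
          have : Ox - q - Ox = -q := by ring
          rw [this, neg_pow, hq2]; ring
        have h3 : (1 - v ^ 2) * ((Ox - q - Ox) ^ 2 - (R ^ 2 - Oy ^ 2)) = 0 := by
          rw [h2]; ring
        linarith
  -- condition on axis
  have cond : ∀ t : ℝ, (‖pt t 0 - e‖ = v * ‖pt t 0 - p‖) ↔
      (t - x) ^ 2 = v ^ 2 * ((t - X) ^ 2 + Y ^ 2) := by
    intro t
    rw [hp, he, norm_pt, norm_pt]
    have e1 : ((t - x) ^ 2 + ((0:ℝ) - 0) ^ 2) = (t - x) ^ 2 := by ring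
    have e2 : ((t - X) ^ 2 + ((0:ℝ) - Y) ^ 2) = (t - X) ^ 2 + Y ^ 2 := by ring
    rw [e1, e2]
    constructor
    · intro h
      have := congrArg (· ^ 2) h
      simp only [mul_pow] at this
      rwa [Real.sq_sqrt (by positivity), Real.sq_sqrt (by positivity)] at this
    · intro h
      rw [h, Real.sqrt_mul (sq_nonneg v), Real.sqrt_sq hv0.le]
  have hne' : ∀ t : ℝ, ‖pt t 0 - e‖ = |t - x| := by
    intro t
    rw [he, norm_pt]
    rw [show ((t - x) ^ 2 + ((0:ℝ) - 0) ^ 2) = (t - x) ^ 2 by ring, Real.sqrt_sq_eq_abs]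
  -- main equivalence on points
  have main : ∀ w : EuclideanSpace ℝ (Fin 2),
      (‖w - e‖ = v * ‖w - p‖ ∧ w 1 = 0) ↔
        (w = pt (Ox + q) 0 ∨ w = pt (Ox - q) 0) := by
    intro w
    constructor
    · rintro ⟨h1, h2⟩
      have hw := eq_pt_of w h2
      rw [hw] at h1
      rcases (key (w 0)).mp ((cond (w 0)).mp h1) with h | h
      · left; rw [hw, h]
      · right; rw [hw, h]
    · rintro (rfl | rfl)
      · exact ⟨(cond _).mpr ((key _).mpr (Or.inl rfl)), pt_apply1 _ _⟩
      · exact ⟨(cond _).mpr ((key _).mpr (Or.inr rfl)), pt_apply1 _ _⟩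
  refine ⟨⟨pt (Ox + q) 0, (main _).mpr (Or.inl rfl)⟩, main, ?_, ?_⟩
  · -- membership
    rcases le_total x Ox with h | h
    · refine ⟨pt (Ox + q) 0, ((main _).mpr (Or.inl rfl)).1, pt_apply1 _ _, ?_⟩
      rw [hne', abs_of_nonneg (by linarith), abs_of_nonneg (by linarith)]; ring
    · refine ⟨pt (Ox - q) 0, ((main _).mpr (Or.inr rfl)).1, pt_apply1 _ _, ?_⟩
      rw [hne', abs_of_nonpos (by linarith), abs_of_nonpos (by linarith)]; ring
  · -- upper bound
    rintro d ⟨w, h1, h2, rfl⟩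
    rcases (main w).mp ⟨h1, h2⟩ with rfl | rfl <;>
      · rw [hne', abs_le]
        constructor <;> nlinarith [le_abs_self (Ox - x), neg_abs_le (Ox - x)]
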